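/- Let $(W,S)$ be a Coxeter system acting on a real vector space $\mathfrak{a}$ via a free and cofree Kac-Moody root datum, with simple roots $\alpha_i \in \mathfrak{a}^*$ and simple coroots $\alpha_i^\vee \in \mathfrak{a}$ satisfying $\langle \alpha_j, \alpha_i^\vee \rangle = a_{ij}$. Let $h \in C$ lie in the open fundamental chamber, i.e. $\langle \alpha_i, h \rangle > 0$ for all $i$. Then for every $w \in W$, one has $h - w(h) = \sum_{i} c_i \alpha_i^\vee$ with $c_i > 0$ for all $i$ in the support of $w$ and $c_i = 0$ for all $i$ not in the support of $w$. -/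

import Mathlib

open scoped Pointwise

/-- The Coxeter matrix entry attached to a product `a_ij * a_ji` of entries of a
generalized Cartan matrix, via the standard table (`0` encodes `∞`). -/
def gcmCoxeterEntry (p : ℤ) : ℕ :=
  if p = 0 then 2 else if p = 1 then 3 else if p = 2 then 4 else if p = 3 then 6 else 0

/-- The Weyl group of a symmetrizable generalized Cartan matrix, together with its action
on the real Cartan subalgebra of a free and cofree Kac–Moody root datum. -/
structure KMWeyl (n : ℕ) (V : Type*) [AddCommGroup V] [Module ℝ V]
    (W : Type*) [Group W] (M : CoxeterMatrix (Fin n)) where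
  /-- the generalized Cartan matrix -/
  A : Matrix (Fin n) (Fin n) ℤ
  diag : ∀ i, A i i = 2
  offDiag : ∀ i j, i ≠ j → A i j ≤ 0
  zeroIff : ∀ i j, (A i j = 0 ↔ A j i = 0)
  symmetrizable : ∃ D B : Matrix (Fin n) (Fin n) ℝ, D.IsDiag ∧ B.IsSymm ∧
    A.map (Int.cast : ℤ → ℝ) = D * B
  coxMat : ∀ i j, i ≠ j → M i j = gcmCoxeterEntry (A i j * A j i)
  /-- the Coxeter system structure on the Weyl group -/
  cs : CoxeterSystem M W
  /-- the linear action of the Weyl group on the Cartan subalgebra -/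
  ρ : W →* (V →ₗ[ℝ] V)
  /-- the simple roots -/
  α : Fin n → (V →ₗ[ℝ] ℝ)
  /-- the simple coroots -/
  cor : Fin n → V
  pairing : ∀ i j, α j (cor i) = (A i j : ℝ)
  refl : ∀ i v, ρ (cs.simple i) v = v - α i v • cor i
  freeRoots : LinearIndependent ℝ α
  cofree : LinearIndependent ℝ cor

namespace KMWeyl

variable {n : ℕ} {V : Type*} [AddCommGroup V] [Module ℝ V]
  {W : Type*} [Group W] {M : CoxeterMatrix (Fin n)}

/-- The orbit of a point `h` under the Weyl group. -/
def orb (K : KMWeyl n V W M) (h : V) : Set V := Set.range fun w => K.ρ w h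

/-- The standard subgroup generated by the simple reflections indexed by `J`. -/
def std (K : KMWeyl n V W M) (J : Set (Fin n)) : Subgroup W :=
  Subgroup.closure (K.cs.simple '' J)

/-- The support of `w`: the indices occurring in every reduced word for `w`. -/
def supp (K : KMWeyl n V W M) (w : W) : Set (Fin n) :=
  {i | ∀ l : List (Fin n), K.cs.wordProd l = w → l.length = K.cs.length w → i ∈ l}

end KMWeyl

/-! ### Auxiliary development -/

/-- Coefficient recursion for the rank-two (dihedral) computation. -/
def dihXY (P : ℤ) : ℕ → ℤ × ℤ
  | 0 => (1, 0)
  | (k+1) =>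
    if Even k then ((dihXY P k).1, (dihXY P k).1 - (dihXY P k).2)
    else (P * (dihXY P k).2 - (dihXY P k).1, (dihXY P k).2)

lemma dihXY_big {P : ℤ} (hP : 4 ≤ P) (k : ℕ) :
    0 ≤ (dihXY P k).1 ∧ 0 ≤ (dihXY P k).2 ∧
      (Even k → 2 * (dihXY P k).2 ≤ (dihXY P k).1) ∧
      (¬ Even k → 2 * (dihXY P k).1 ≤ P * (dihXY P k).2) := by
  induction k with
  | zero => simp [dihXY]
  | succ k ih =>
    obtain ⟨hx, hy, he, ho⟩ := ih
    by_cases hk : Even k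
    · have h2 := he hk
      have hk' : ¬ Even (k+1) := by simpa [Nat.even_add_one] using hk
      refine ⟨?_, ?_, ?_, ?_⟩ <;> simp [dihXY, hk, hk'] <;> nlinarith
    · have h2 := ho hk
      have hk' : Even (k+1) := by simpa [Nat.even_add_one] using hk
      refine ⟨?_, ?_, ?_, ?_⟩ <;> simp [dihXY, hk, hk'] <;> nlinarith

lemma dihXY_nonneg {P : ℤ} (hP : 0 ≤ P) {k : ℕ}
    (hk : gcmCoxeterEntry P = 0 ∨ k + 1 ≤ gcmCoxeterEntry P) :
    0 ≤ (dihXY P k).1 ∧ 0 ≤ (dihXY P k).2 := by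
  by_cases h4 : 4 ≤ P
  · exact ⟨(dihXY_big h4 k).1, (dihXY_big h4 k).2.1⟩
  · interval_cases P <;>
      simp only [gcmCoxeterEntry] at hk <;> norm_num at hk <;>
      interval_cases k <;> decide

namespace KMWeyl

variable {n : ℕ} {V : Type*} [AddCommGroup V] [Module ℝ V]
  {W : Type*} [Group W] {M : CoxeterMatrix (Fin n)} (K : KMWeyl n V W M)

local prefix:100 "ℓ" => K.cs.length
local prefix:100 "π" => K.cs.wordProd
local prefix:100 "σ" => K.cs.simple

lemma dih_formula (i j : Fin n) (k : ℕ) :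
    K.ρ (π (CoxeterSystem.alternatingWord i j k)) (K.cor i)
      = ((dihXY (K.A i j * K.A j i) k).1 : ℝ) • K.cor i
        + (((-(K.A i j) * (dihXY (K.A i j * K.A j i) k).2 : ℤ) : ℝ)) • K.cor j := by
  induction k with
  | zero => simp [CoxeterSystem.alternatingWord, dihXY]
  | succ k ih =>
    rw [CoxeterSystem.alternatingWord_succ', K.cs.wordProd_cons, map_mul,
      Module.End.mul_apply, ih]
    by_cases hk : Even k
    · rw [if_pos hk, K.refl]
      rw [map_add, map_smul, map_smul, K.pairing, K.pairing, K.diag]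
      simp only [dihXY, if_pos hk, smul_eq_mul]
      push_cast
      module
    · rw [if_neg hk, K.refl]
      rw [map_add, map_smul, map_smul, K.pairing, K.pairing, K.diag]
      simp only [dihXY, if_neg hk, smul_eq_mul]
      push_cast
      module

lemma peel : ∀ (N : ℕ) (w : W) (i j : Fin n), ℓ w ≤ N → ℓ (w * σ j) < ℓ w →
    ∃ (u : W) (k : ℕ), 1 ≤ k ∧ w = u * π (CoxeterSystem.alternatingWord i j k) ∧
      ℓ w = ℓ u + k ∧ ℓ u < ℓ (u * σ i) ∧ ℓ u < ℓ (u * σ j) := by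
  intro N
  induction N with
  | zero => intro w i j hN hd; omega
  | succ N IH =>
    intro w i j hN hd
    have hlw1' : ℓ w = ℓ (w * σ j) + 1 := by
      rcases K.cs.length_mul_simple w j with hc | hc
      · omega
      · omega
    set w1 := w * σ j with hw1
    have hww1 : w1 * σ j = w := by
      rw [hw1, mul_assoc, K.cs.simple_mul_simple_self, mul_one]
    have hlw1 : ℓ w = ℓ w1 + 1 := hlw1'
    rcases K.cs.length_mul_simple w1 i with hc | hc
    · refine ⟨w1, 1, le_refl 1, ?_, by omega, by omega, ?_⟩
      · have : CoxeterSystem.alternatingWord i j 1 = [j] := rfl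
        rw [this, K.cs.wordProd_singleton, hww1]
      · rw [hww1]; omega
    · have hd1 : ℓ (w1 * σ i) < ℓ w1 := by omega
      obtain ⟨u, k, hk1, hkw, hkl, hki, hkj⟩ := IH w1 j i (by omega) hd1
      refine ⟨u, k + 1, by omega, ?_, by omega, hkj, hki⟩
      rw [← hww1, hkw, mul_assoc, ← K.cs.wordProd_concat,
        ← CoxeterSystem.alternatingWord_succ]

lemma posA : ∀ (N : ℕ) (w : W) (i : Fin n), ℓ w ≤ N → ℓ w < ℓ (w * σ i) →
    ∃ b : Fin n → ℝ, (∀ j, 0 ≤ b j) ∧ K.ρ w (K.cor i) = ∑ j, b j • K.cor j := by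
  intro N
  induction N with
  | zero =>
    intro w i hN _
    have hw : w = 1 := K.cs.length_eq_zero_iff.mp (by omega)
    refine ⟨fun j => if j = i then 1 else 0, fun j => by positivity, ?_⟩
    simp [hw, ite_smul]
  | succ N IH =>
    intro w i hN hi
    by_cases hw : w = 1
    · refine ⟨fun j => if j = i then 1 else 0, fun j => by positivity, ?_⟩
      simp [hw, ite_smul]
    · obtain ⟨j, hj⟩ := K.cs.exists_rightDescent_of_ne_one hw
      have hdj : ℓ (w * σ j) < ℓ w := hj
      have hij : i ≠ j := by
        rintro rfl
        omega
      obtain ⟨u, k, hk1, hkw, hkl, hki, hkj⟩ := K.peel (N+1) w i j hN hdj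
      set v := π (CoxeterSystem.alternatingWord i j k) with hv
      -- the alternating word of length `k + 1` ending in `i` is reduced
      have hwsi : ℓ (w * σ i) = ℓ w + 1 := by
        rcases K.cs.length_mul_simple w i with hc | hc
        · exact hc
        · omega
      have hred : K.cs.IsReduced (CoxeterSystem.alternatingWord j i (k+1)) := by
        have h1 : π (CoxeterSystem.alternatingWord j i (k+1)) = v * σ i := by
          rw [CoxeterSystem.alternatingWord_succ, K.cs.wordProd_concat]
        have h2 : ℓ (v * σ i) ≤ k + 1 := by
          rw [← h1]
          have := K.cs.length_wordProd_le (CoxeterSystem.alternatingWord j i (k+1))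
          rwa [CoxeterSystem.length_alternatingWord] at this
        have h3 : ℓ (w * σ i) ≤ ℓ u + ℓ (v * σ i) := by
          rw [hkw, mul_assoc]
          exact K.cs.length_mul_le u (v * σ i)
        have h4 : ℓ (v * σ i) = k + 1 := by omega
        unfold CoxeterSystem.IsReduced
        rw [h1, h4, CoxeterSystem.length_alternatingWord]
      have hM : M j i = 0 ∨ k + 1 ≤ M j i := by
        by_contra hcon
        push_neg at hcon
        exact K.cs.not_isReduced_alternatingWord j i hcon.1 (by omega) hred
      have hgcm : M j i = gcmCoxeterEntry (K.A i j * K.A j i) := by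
        rw [K.coxMat j i (Ne.symm hij), mul_comm]
      have hP : (0:ℤ) ≤ K.A i j * K.A j i := by
        have := mul_nonneg (neg_nonneg.2 (K.offDiag i j hij))
          (neg_nonneg.2 (K.offDiag j i (Ne.symm hij)))
        rwa [neg_mul_neg] at this
      obtain ⟨hX, hY⟩ := dihXY_nonneg hP (k := k) (by rw [← hgcm]; exact hM)
      -- apply the induction hypothesis to `u`
      obtain ⟨b1, hb1n, hb1⟩ := IH u i (by omega) hki
      obtain ⟨b2, hb2n, hb2⟩ := IH u j (by omega) hkj
      set x : ℝ := ((dihXY (K.A i j * K.A j i) k).1 : ℝ) with hx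
      set y : ℝ := ((-(K.A i j) * (dihXY (K.A i j * K.A j i) k).2 : ℤ) : ℝ) with hy
      have hxn : 0 ≤ x := by rw [hx]; exact_mod_cast hX
      have hyn : 0 ≤ y := by
        rw [hy]
        have h0 : (0:ℤ) ≤ -(K.A i j) * (dihXY (K.A i j * K.A j i) k).2 :=
          mul_nonneg (by linarith [K.offDiag i j hij]) hY
        exact_mod_cast h0
      refine ⟨fun t => x * b1 t + y * b2 t,
        fun t => add_nonneg (mul_nonneg hxn (hb1n t)) (mul_nonneg hyn (hb2n t)), ?_⟩
      rw [hkw, map_mul, Module.End.mul_apply, hv, K.dih_formula i j k, ← hx, ← hy,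
        map_add, map_smul, map_smul, hb1, hb2, Finset.smul_sum, Finset.smul_sum,
        ← Finset.sum_add_distrib]
      refine Finset.sum_congr rfl fun t _ => ?_
      rw [smul_smul, smul_smul, ← add_smul]

lemma coeffF : ∀ (m : List (Fin n)) (i : Fin n), ∃ b : Fin n → ℝ,
    K.ρ (π m) (K.cor i) = ∑ j, b j • K.cor j ∧ (∀ j, j ∉ (i :: m) → b j = 0) ∧
      (i ∉ m → b i = 1) := by
  intro m
  induction m with
  | nil =>
    intro i
    refine ⟨fun j => if j = i then 1 else 0, ?_, ?_, ?_⟩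
    · simp [ite_smul]
    · intro j hj
      simp only [List.mem_cons, List.not_mem_nil, or_false] at hj
      simp [hj]
    · simp
  | cons k m IH =>
    intro i
    obtain ⟨b, hb, hbs, hbi⟩ := IH i
    set d : ℝ := -(∑ t, b t * (K.A t k : ℝ)) with hd
    refine ⟨fun j => if j = k then b k + d else b j, ?_, ?_, ?_⟩
    · have hsum : ∑ j, (if j = k then b k + d else b j) • K.cor j
          = ∑ j, (b j • K.cor j + if j = k then d • K.cor k else 0) := by
        refine Finset.sum_congr rfl fun j _ => ?_
        by_cases hj : j = k
        · subst hj; simp [add_smul]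
        · simp [hj]
      rw [hsum, Finset.sum_add_distrib, Finset.sum_ite_eq' Finset.univ k
        (fun _ => d • K.cor k)]
      simp only [Finset.mem_univ, if_pos]
      rw [K.cs.wordProd_cons, map_mul, Module.End.mul_apply, hb, K.refl, map_sum]
      have hα : (∑ t, K.α k (b t • K.cor t)) = ∑ t, b t * (K.A t k : ℝ) := by
        refine Finset.sum_congr rfl fun t _ => ?_
        rw [map_smul, K.pairing, smul_eq_mul]
      rw [hα, sub_eq_add_neg, ← neg_smul, ← hd]
    · intro j hj
      simp only [List.mem_cons, not_or] at hj
      obtain ⟨hj1, hj2, hj3⟩ := hj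
      simp only [if_neg hj2]
      exact hbs j (by simp [hj1, hj3])
    · intro hi
      simp only [List.mem_cons, not_or] at hi
      simp only [if_neg hi.1]
      exact hbi hi.2

lemma coeff_eq {b c : Fin n → ℝ} (h : ∑ j, b j • K.cor j = ∑ j, c j • K.cor j) :
    b = c := by
  funext j
  have h0 : ∑ t, (b t - c t) • K.cor t = 0 := by
    simp only [sub_smul, Finset.sum_sub_distrib, h, sub_self]
  have := Fintype.linearIndependent_iff.mp K.cofree (fun t => b t - c t) h0 j
  linarith

lemma mainStep (h : V) (hC : ∀ i, 0 < K.α i h) (l : List (Fin n)) :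
    K.cs.IsReduced l → ∃ c : Fin n → ℝ,
      h - K.ρ (π l) h = ∑ j, c j • K.cor j ∧
        (∀ j ∈ l, 0 < c j) ∧ (∀ j ∉ l, c j = 0) := by
  induction l using List.reverseRecOn with
  | nil => exact fun _ => ⟨0, by simp, by simp, by simp⟩
  | append_singleton l i ih =>
    intro hred
    have hl : K.cs.IsReduced l := by
      have := hred.take l.length
      simpa using this
    obtain ⟨c', hc1, hc2, hc3⟩ := ih hl
    have hsplit : π (l ++ [i]) = π l * σ i := by
      rw [K.cs.wordProd_append, K.cs.wordProd_singleton]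
    have hlt : ℓ (π l) < ℓ (π l * σ i) := by
      have h1 : ℓ (π l) = l.length := hl
      have h2 : ℓ (π (l ++ [i])) = l.length + 1 := by
        have := hred
        unfold CoxeterSystem.IsReduced at this
        simpa using this
      rw [← hsplit, h2, h1]
      omega
    obtain ⟨bA, hbA0, hbA⟩ := K.posA (ℓ (π l)) (π l) i le_rfl hlt
    obtain ⟨bF, hbF, hbFsupp, hbFone⟩ := K.coeffF l i
    have hbeq : bA = bF := K.coeff_eq (by rw [← hbA, ← hbF])
    have key : h - K.ρ (π (l ++ [i])) h
        = ∑ j, (c' j + K.α i h * bA j) • K.cor j := by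
      have e1 : K.ρ (π (l ++ [i])) h = K.ρ (π l) h - K.α i h • K.ρ (π l) (K.cor i) := by
        rw [hsplit, map_mul, Module.End.mul_apply, K.refl, map_sub, map_smul]
      have e2 : h - K.ρ (π (l ++ [i])) h
          = (h - K.ρ (π l) h) + K.α i h • K.ρ (π l) (K.cor i) := by
        rw [e1]; abel
      rw [e2, hbA, hc1, Finset.smul_sum, ← Finset.sum_add_distrib]
      refine Finset.sum_congr rfl fun t _ => ?_
      rw [smul_smul, add_smul]
    refine ⟨fun j => c' j + K.α i h * bA j, key, ?_, ?_⟩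
    · intro j hj
      rcases List.mem_append.mp hj with hj | hj
      · exact add_pos_of_pos_of_nonneg (hc2 j hj)
          (mul_nonneg (le_of_lt (hC i)) (hbA0 j))
      · rw [List.mem_singleton] at hj
        subst hj
        by_cases hjl : j ∈ l
        · exact add_pos_of_pos_of_nonneg (hc2 j hjl)
            (mul_nonneg (le_of_lt (hC j)) (hbA0 j))
        · have hb1 : bA j = 1 := by rw [hbeq]; exact hbFone hjl
          simp only [hc3 j hjl, hb1, zero_add, mul_one]
          exact hC j
    · intro j hj
      rw [List.mem_append, not_or, List.mem_singleton] at hj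
      have hb0 : bA j = 0 := by
        rw [hbeq]
        refine hbFsupp j ?_
        simp only [List.mem_cons, not_or]
        exact ⟨fun hji => hj.2 hji, hj.1⟩
      simp only [hc3 j hj.1, hb0, mul_zero, add_zero]

theorem final {K : KMWeyl n V W M}
    (h : V) (hC : ∀ i, 0 < K.α i h) (w : W) :
    ∃ c : Fin n → ℝ, h - K.ρ w h = ∑ i, c i • K.cor i ∧
      (∀ i ∈ K.supp w, 0 < c i) ∧ (∀ i ∉ K.supp w, c i = 0) := by
  obtain ⟨l, hlen, hw⟩ : ∃ l : List (Fin n), l.length = K.cs.length w ∧ w = K.cs.wordProd l := by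
    obtain ⟨l, hl, hw⟩ := K.cs.exists_isReduced w
    exact ⟨l, by rw [hw, hl.eq], hw⟩
  have hred : K.cs.IsReduced l := by
    unfold CoxeterSystem.IsReduced
    rw [← hw, hlen]
  obtain ⟨c, hc1, hc2, hc3⟩ := K.mainStep h hC l hred
  refine ⟨c, by rw [hw]; exact hc1, ?_, ?_⟩
  · intro i hi
    exact hc2 i (hi l hw.symm hlen)
  · intro i hi
    simp only [KMWeyl.supp, Set.mem_setOf_eq] at hi
    push_neg at hi
    obtain ⟨l', hl'w, hl'len, hil'⟩ := hi
    have hred' : K.cs.IsReduced l' := by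
      unfold CoxeterSystem.IsReduced
      rw [hl'w, hl'len]
    obtain ⟨c2, hc21, _, hc23⟩ := K.mainStep h hC l' hred'
    have hcc : c = c2 := by
      refine K.coeff_eq ?_
      rw [← hc1, ← hc21, ← hw, hl'w]
    rw [hcc]
    exact hc23 i hil'

end KMWeyl



/-- For `h` in the open fundamental chamber and `w` in the Weyl group,
`h - w(h)` is a linear combination of simple coroots whose coefficients are positive exactly
on the support of `w` and zero off the support. -/
theorem stmt_1 {n : ℕ} {V : Type*} [AddCommGroup V] [Module ℝ V]
    {W : Type*} [Group W] {M : CoxeterMatrix (Fin n)} (K : KMWeyl n V W M)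
    (h : V) (hC : ∀ i, 0 < K.α i h) (w : W) :
    ∃ c : Fin n → ℝ, h - K.ρ w h = ∑ i, c i • K.cor i ∧
      (∀ i ∈ K.supp w, 0 < c i) ∧ (∀ i ∉ K.supp w, c i = 0) :=
  KMWeyl.final (K := K) h hC w
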